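/- Fix real numbers t₀ and L(t₀), and consider linear functions L on [s,τ] ⊆ (0,∞) with fixed value L(s) and slope m. The quantity ∫_s^τ -(L(t')/t' - m)² dt', viewed as a function of the slope m, is a quadratic function of m maximized at m = L(s)/s. -/

import Mathlib

open intervalIntegral

/-- For a linear function `L(t') = c + m(t'-s)` on `[s,τ] ⊆ (0,∞)` with fixed value
`c = L(s)` and slope `m`, the quantity `∫_s^τ -(L(t')/t' - m)² dt'` is a quadratic
function of `m`, maximized at `m = c/s`. -/
theorem stmt13 (s τ : ℝ) (hs : 0 < s) (hsτ : s < τ) (c : ℝ) :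
    (∃ α β γ : ℝ, ∀ m : ℝ,
      (∫ t' in s..τ, -((c + m * (t' - s)) / t' - m) ^ 2) = α * m ^ 2 + β * m + γ) ∧
    (∀ m : ℝ,
      (∫ t' in s..τ, -((c + m * (t' - s)) / t' - m) ^ 2) ≤
        ∫ t' in s..τ, -((c + (c / s) * (t' - s)) / t' - c / s) ^ 2) := by
  have hzero : (0:ℝ) ∉ Set.uIcc s τ := by
    rw [Set.uIcc_of_le hsτ.le]
    intro h
    exact absurd h.1 (not_le.mpr hs)
  have key : ∀ m : ℝ, (∫ t' in s..τ, -((c + m * (t' - s)) / t' - m) ^ 2)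
      = -((c - m*s)^2) * (s⁻¹ - τ⁻¹) := by
    intro m
    have h1 : Set.EqOn (fun t' : ℝ => -((c + m * (t' - s)) / t' - m) ^ 2)
        (fun t' : ℝ => -((c - m*s)^2) * t' ^ (-2 : ℤ)) (Set.uIcc s τ) := by
      intro t' ht'
      have ht0 : t' ≠ 0 := fun h => hzero (h ▸ ht')
      have h2 : t' ^ (-2 : ℤ) = (t' ^ 2)⁻¹ := by
        rw [zpow_neg, zpow_two, sq]
      simp only [h2]
      field_simp
      ring
    have hzint : (∫ t' in s..τ, t' ^ (-2 : ℤ)) = s⁻¹ - τ⁻¹ := by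
      rw [integral_zpow (Or.inr ⟨by decide, hzero⟩)]
      norm_num
      ring
    rw [intervalIntegral.integral_congr h1, intervalIntegral.integral_const_mul, hzint]
  have hK : (0:ℝ) ≤ s⁻¹ - τ⁻¹ := by
    have : τ⁻¹ ≤ s⁻¹ := one_div τ ▸ one_div s ▸
      (one_div_le_one_div_of_le hs hsτ.le)
    linarith
  constructor
  · refine ⟨-(s^2) * (s⁻¹ - τ⁻¹), 2*c*s * (s⁻¹ - τ⁻¹), -(c^2) * (s⁻¹ - τ⁻¹), fun m => ?_⟩
    rw [key m]; ring
  · intro m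
    rw [key m, key (c/s)]
    have : c - (c/s)*s = 0 := by field_simp; ring
    rw [this]
    nlinarith [sq_nonneg (c - m*s)]
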